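/- Let p₁, p₂, p₃ be distinct primes, each congruent to 7 modulo 8, with (−p₁/p₂) = (−p₂/p₃) = (−p₃/p₁) = −1. Let (a, b) be the fundamental solution of the Pell equation x² − 2p₁p₂p₃·y² = 1. Then there exist integers b₁, b₂ with b = b₁·b₂, a + 1 = b₁², and a − 1 = 2p₁p₂p₃·b₂²; consequently b₁² − 2p₁p₂p₃·b₂² = 2 and 2·(a + b·√(2p₁p₂p₃)) = (b₁ + b₂·√(2p₁p₂p₃))². -/

import Mathlib

/-- `(a, b)` is the fundamental solution of the Pell equation `x² − D·y² = 1`: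
the solution in positive integers with minimal `a`. -/
def IsFundamentalPellSolution (D a b : ℤ) : Prop :=
  0 < a ∧ 0 < b ∧ a ^ 2 - D * b ^ 2 = 1 ∧
    ∀ a' b' : ℤ, 0 < a' → 0 < b' → a' ^ 2 - D * b' ^ 2 = 1 → a ≤ a'

private lemma aux_eq_of_pattern {d e₂ e₁ : ℕ} (hd : d ∣ e₂ * e₁) (h2 : e₂ ∣ d)
    (h1 : Nat.Coprime d e₁) : d = e₂ :=
  Nat.dvd_antisymm (h1.dvd_of_dvd_mul_right hd) h2

private lemma aux_nat_sq_of_coprime {x y z : ℕ} (h : Nat.Coprime x y) (heq : x * y = z ^ 2) :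
    ∃ s : ℕ, x = s ^ 2 := by
  have h' : IsCoprime (x : ℤ) (y : ℤ) := Nat.isCoprime_iff_coprime.mpr h
  obtain ⟨w, hw | hw⟩ := Int.sq_of_isCoprime h' (c := (z : ℤ)) (by exact_mod_cast heq)
  · refine ⟨w.natAbs, ?_⟩
    have : (x : ℤ) = (w.natAbs : ℤ) ^ 2 := by rw [Int.natAbs_sq]; exact hw
    exact_mod_cast this
  · have h0 : (x : ℤ) = 0 := by nlinarith [sq_nonneg w, Int.natCast_nonneg x]
    have hx0 : x = 0 := by exact_mod_cast h0
    exact ⟨0, by simp [hx0]⟩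

private lemma aux_killer (p : ℕ) [Fact p.Prime] (d : ℕ) (t : ℕ)
    (hmod : ((d : ℕ) : ZMod p) * ((t : ℕ) : ZMod p) ^ 2 = 1)
    (hleg : legendreSym p (d : ℤ) = -1) : False := by
  have hd0 : ((d : ℤ) : ZMod p) ≠ 0 := by
    push_cast
    intro h
    rw [h, zero_mul] at hmod
    exact zero_ne_one hmod
  have hsq : IsSquare (((d : ℤ)) : ZMod p) := by
    have hdt : (d : ZMod p) = (((t : ZMod p))⁻¹) ^ 2 := by
      rw [inv_pow]
      exact eq_inv_of_mul_eq_one_left hmod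
    push_cast
    exact ⟨((t : ZMod p))⁻¹, by rw [hdt, sq]⟩
  rw [(legendreSym.eq_one_iff p hd0).mpr hsq] at hleg
  norm_num at hleg

private lemma aux_no_sol_mod8 {m' : ℕ} (hm : m' % 8 = 7) {s t : ℕ} (ht : t % 2 = 1)
    (hE : m' * t ^ 2 = 2 * s ^ 2 + 1) : False := by
  obtain ⟨r, hr⟩ : ∃ r, t = 2 * r + 1 := ⟨t / 2, by omega⟩
  obtain ⟨w, hw⟩ : Even (r * (r + 1)) := Nat.even_mul_succ_self r
  have htz : (t : ℤ) ^ 2 = 8 * w + 1 := by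
    have h1 : (t : ℤ) = 2 * r + 1 := by exact_mod_cast hr
    have h2 : (r : ℤ) * (r + 1) = w + w := by exact_mod_cast hw
    rw [h1]; linear_combination 4 * h2
  have h8 := congrArg (fun z : ℤ => (z : ZMod 8)) (show (m' : ℤ) * t ^ 2 = 2 * s ^ 2 + 1 by
    exact_mod_cast hE)
  push_cast at h8
  have hm8 : ((m' : ℕ) : ZMod 8) = 7 := by
    rw [← ZMod.natCast_mod, hm]; rfl
  have ht8 : ((t : ℕ) : ZMod 8) ^ 2 = 1 := by
    have := congrArg (fun z : ℤ => (z : ZMod 8)) htz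
    push_cast at this
    rw [this, show ((8 : ZMod 8)) = 0 by rfl]
    ring
  rw [hm8, ht8] at h8
  have : ∀ x : ZMod 8, (7 : ZMod 8) * 1 ≠ 2 * x ^ 2 + 1 := by decide
  exact this _ h8

/-- decomposition of the fundamental solution of
`x² − 2p₁p₂p₃·y² = 1` for primes `p₁, p₂, p₃ ≡ 7 (mod 8)` with
`(−p₁/p₂) = (−p₂/p₃) = (−p₃/p₁) = −1`. -/
theorem stmt_3 (p₁ p₂ p₃ : ℕ)
    [hp₁ : Fact p₁.Prime] [hp₂ : Fact p₂.Prime] [hp₃ : Fact p₃.Prime]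
    (hd₁₂ : p₁ ≠ p₂) (hd₁₃ : p₁ ≠ p₃) (hd₂₃ : p₂ ≠ p₃)
    (hc₁ : p₁ % 8 = 7) (hc₂ : p₂ % 8 = 7) (hc₃ : p₃ % 8 = 7)
    (h₁ : legendreSym p₂ (-(p₁ : ℤ)) = -1)
    (h₂ : legendreSym p₃ (-(p₂ : ℤ)) = -1)
    (h₃ : legendreSym p₁ (-(p₃ : ℤ)) = -1)
    (a b : ℤ)
    (hab : IsFundamentalPellSolution (2 * p₁ * p₂ * p₃) a b) :
    ∃ b₁ b₂ : ℤ, b = b₁ * b₂ ∧ a + 1 = b₁ ^ 2 ∧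
      a - 1 = 2 * p₁ * p₂ * p₃ * b₂ ^ 2 ∧
      b₁ ^ 2 - 2 * p₁ * p₂ * p₃ * b₂ ^ 2 = 2 ∧
      2 * ((a : ℝ) + (b : ℝ) * Real.sqrt (2 * p₁ * p₂ * p₃)) =
        ((b₁ : ℝ) + (b₂ : ℝ) * Real.sqrt (2 * p₁ * p₂ * p₃)) ^ 2 := by
  obtain ⟨ha_pos, hb_pos, heq, hmin⟩ := hab
  -- basic facts about the primes
  have hne2₁ : p₁ ≠ 2 := by omega
  have hne2₂ : p₂ ≠ 2 := by omega
  have hne2₃ : p₃ ≠ 2 := by omega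
  have hpos₁ : 0 < p₁ := hp₁.out.pos
  have hpos₂ : 0 < p₂ := hp₂.out.pos
  have hpos₃ : 0 < p₃ := hp₃.out.pos
  -- Legendre symbol facts
  have ltwo₁ : legendreSym p₁ 2 = 1 := by
    rw [legendreSym.at_two hne2₁, ZMod.χ₈_nat_mod_eight, hc₁]; decide
  have ltwo₂ : legendreSym p₂ 2 = 1 := by
    rw [legendreSym.at_two hne2₂, ZMod.χ₈_nat_mod_eight, hc₂]; decide
  have ltwo₃ : legendreSym p₃ 2 = 1 := by
    rw [legendreSym.at_two hne2₃, ZMod.χ₈_nat_mod_eight, hc₃]; decide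
  have lneg₁ : legendreSym p₁ (-1) = -1 := by
    rw [legendreSym.at_neg_one hne2₁]; exact ZMod.χ₄_nat_three_mod_four (by omega)
  have lneg₂ : legendreSym p₂ (-1) = -1 := by
    rw [legendreSym.at_neg_one hne2₂]; exact ZMod.χ₄_nat_three_mod_four (by omega)
  have lneg₃ : legendreSym p₃ (-1) = -1 := by
    rw [legendreSym.at_neg_one hne2₃]; exact ZMod.χ₄_nat_three_mod_four (by omega)
  have s12 : legendreSym p₂ (p₁ : ℤ) = 1 := by
    have h' : legendreSym p₂ ((-1) * (p₁ : ℤ)) = -1 := by rwa [neg_one_mul]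
    rw [legendreSym.mul, lneg₂] at h'
    linarith
  have s23 : legendreSym p₃ (p₂ : ℤ) = 1 := by
    have h' : legendreSym p₃ ((-1) * (p₂ : ℤ)) = -1 := by rwa [neg_one_mul]
    rw [legendreSym.mul, lneg₃] at h'
    linarith
  have s31 : legendreSym p₁ (p₃ : ℤ) = 1 := by
    have h' : legendreSym p₁ ((-1) * (p₃ : ℤ)) = -1 := by rwa [neg_one_mul]
    rw [legendreSym.mul, lneg₁] at h'
    linarith
  have s21 : legendreSym p₁ (p₂ : ℤ) = -1 := by
    rw [legendreSym.quadratic_reciprocity_three_mod_four (by omega : p₂ % 4 = 3)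
      (by omega : p₁ % 4 = 3), s12]
  have s32 : legendreSym p₂ (p₃ : ℤ) = -1 := by
    rw [legendreSym.quadratic_reciprocity_three_mod_four (by omega : p₃ % 4 = 3)
      (by omega : p₂ % 4 = 3), s23]
  have s13 : legendreSym p₃ (p₁ : ℤ) = -1 := by
    rw [legendreSym.quadratic_reciprocity_three_mod_four (by omega : p₁ % 4 = 3)
      (by omega : p₃ % 4 = 3), s31]
  -- a is odd
  have heq' : a ^ 2 = 2 * (p₁ : ℤ) * p₂ * p₃ * b ^ 2 + 1 := by linear_combination heq
  have ha_odd : Odd a := by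
    have h1 : Even (a ^ 2 - 1) := ⟨(p₁ : ℤ) * p₂ * p₃ * b ^ 2, by linear_combination heq⟩
    obtain ⟨r, hr⟩ := h1
    have : Odd (a ^ 2) := ⟨r, by linarith⟩
    exact (Int.odd_pow.mp this).resolve_right (by norm_num)
  obtain ⟨k, hk⟩ := ha_odd
  -- b is even
  have hkk : Even (k * (k + 1)) := Int.even_mul_succ_self k
  obtain ⟨j, hj⟩ := hkk
  have hPb : (p₁ : ℤ) * p₂ * p₃ * b ^ 2 = 4 * j := by
    have h4 : 2 * ((p₁ : ℤ) * p₂ * p₃ * b ^ 2) = 2 * (4 * j) := by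
      linear_combination (-1 : ℤ) * heq' + (a + 2 * k + 1) * hk + 4 * hj
    exact mul_left_cancel₀ (by norm_num) h4
  have hb_even : Even b := by
    by_contra hodd
    rw [Int.not_even_iff_odd] at hodd
    have hP_odd : Odd ((p₁ : ℤ) * p₂ * p₃ * b ^ 2) := by
      have o1 : Odd (p₁ : ℤ) := by
        obtain ⟨m, hm⟩ := Nat.odd_iff.mpr (show p₁ % 2 = 1 by omega)
        exact ⟨(m : ℤ), by exact_mod_cast hm⟩
      have o2 : Odd (p₂ : ℤ) := by
        obtain ⟨m, hm⟩ := Nat.odd_iff.mpr (show p₂ % 2 = 1 by omega)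
        exact ⟨(m : ℤ), by exact_mod_cast hm⟩
      have o3 : Odd (p₃ : ℤ) := by
        obtain ⟨m, hm⟩ := Nat.odd_iff.mpr (show p₃ % 2 = 1 by omega)
        exact ⟨(m : ℤ), by exact_mod_cast hm⟩
      exact ((o1.mul o2).mul o3).mul (hodd.pow)
    obtain ⟨r, hr⟩ := hP_odd
    have : 4 * j = 2 * r + 1 := by rw [← hPb, hr]
    omega
  obtain ⟨c, hc⟩ := hb_even
  have hbc : b = 2 * c := by linarith
  have hc_pos : 0 < c := by linarith
  -- k ≥ 1
  have hP_pos : (0 : ℤ) < (p₁ : ℤ) * p₂ * p₃ := by positivity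
  have hk_pos : 0 < k := by
    rcases lt_or_ge 0 k with h | h
    · exact h
    · exfalso
      have ha1 : a = 1 := by omega
      have hz : 2 * ((p₁ : ℤ) * p₂ * p₃ * b ^ 2) = 0 := by
        rw [ha1] at heq'; linarith
      have hz' : (p₁ : ℤ) * p₂ * p₃ * b ^ 2 = 0 := by linarith
      have hb2 : b ^ 2 = 0 := by
        rcases mul_eq_zero.mp hz' with h' | h'
        · linarith
        · exact h'
      have : b = 0 := by
        exact pow_eq_zero_iff (by norm_num) |>.mp hb2
      omega
  -- pass to natural numbers
  set K : ℕ := k.toNat with hKdef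
  set C : ℕ := c.toNat with hCdef
  have hKk : (K : ℤ) = k := Int.toNat_of_nonneg (by omega)
  have hCc : (C : ℤ) = c := Int.toNat_of_nonneg (by omega)
  have hK1 : 1 ≤ K := by omega
  have haK : a = 2 * (K : ℤ) + 1 := by rw [hKk]; linarith
  have hbC : b = 2 * (C : ℤ) := by rw [hCc]; exact hbc
  have hKC : K * (K + 1) = 2 * p₁ * p₂ * p₃ * C ^ 2 := by
    have hz : (K : ℤ) * ((K : ℤ) + 1) = 2 * (p₁ : ℤ) * p₂ * p₃ * (C : ℤ) ^ 2 := by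
      rw [hKk, hCc]
      have h4 : 4 * (k * (k + 1)) = 4 * (2 * (p₁ : ℤ) * p₂ * p₃ * c ^ 2) := by
        linear_combination heq' - (a + 2 * k + 1) * hk
          + 2 * (p₁ : ℤ) * p₂ * p₃ * (b + 2 * c) * hbc
      linarith
    exact_mod_cast hz
  -- the gcd factorization
  have hcop : Nat.Coprime K (K + 1) := by simpa using Nat.gcd_mul_left_add_right K 1 1
  set d₁ : ℕ := Nat.gcd (2 * p₁ * p₂ * p₃) K with hd₁def
  set d₂ : ℕ := Nat.gcd (2 * p₁ * p₂ * p₃) (K + 1) with hd₂def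
  have hprod : d₁ * d₂ = 2 * p₁ * p₂ * p₃ :=
    (Nat.gcd_mul_gcd_eq_iff_dvd_mul_of_coprime hcop).mpr ⟨C ^ 2, hKC⟩
  have hd₁K : d₁ ∣ K := Nat.gcd_dvd_right _ _
  have hd₂V : d₂ ∣ K + 1 := Nat.gcd_dvd_right _ _
  have hd₁N : d₁ ∣ 2 * p₁ * p₂ * p₃ := Nat.gcd_dvd_left _ _
  have hd₂N : d₂ ∣ 2 * p₁ * p₂ * p₃ := Nat.gcd_dvd_left _ _
  have hNpos : 0 < 2 * p₁ * p₂ * p₃ := by positivity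
  have hd₁pos : 0 < d₁ := Nat.pos_of_ne_zero fun h => by
    rw [h, zero_mul] at hprod; omega
  have hd₂pos : 0 < d₂ := Nat.pos_of_ne_zero fun h => by
    rw [h, mul_zero] at hprod; omega
  have hcopd : Nat.Coprime d₁ d₂ :=
    Nat.Coprime.coprime_dvd_right hd₂V (Nat.Coprime.coprime_dvd_left hd₁K hcop)
  -- extract squares
  obtain ⟨U', hU'⟩ : ∃ U', K = d₁ * U' := ⟨K / d₁, (Nat.mul_div_cancel' hd₁K).symm⟩
  obtain ⟨V', hV'⟩ : ∃ V', K + 1 = d₂ * V' := ⟨(K + 1) / d₂, (Nat.mul_div_cancel' hd₂V).symm⟩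
  have hUV' : U' * V' = C ^ 2 := by
    have h' : (d₁ * d₂) * (U' * V') = (d₁ * d₂) * C ^ 2 := by
      rw [hprod]
      calc (2 * p₁ * p₂ * p₃) * (U' * V') = (d₁ * U') * (d₂ * V') := by
            rw [← hprod]; ring
        _ = K * (K + 1) := by rw [← hU', ← hV']
        _ = 2 * p₁ * p₂ * p₃ * C ^ 2 := hKC
    exact Nat.eq_of_mul_eq_mul_left (by positivity) h'
  have hcopUV' : Nat.Coprime U' V' :=
    Nat.Coprime.coprime_dvd_right ⟨d₂, by rw [hV']; ring⟩
      (Nat.Coprime.coprime_dvd_left ⟨d₁, by rw [hU']; ring⟩ hcop)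
  obtain ⟨s, hs⟩ := aux_nat_sq_of_coprime hcopUV' hUV'
  obtain ⟨t, ht⟩ := aux_nat_sq_of_coprime (Nat.Coprime.symm hcopUV')
    (by rw [mul_comm]; exact hUV')
  have hCst : C = s * t := by
    have : C ^ 2 = (s * t) ^ 2 := by rw [← hUV', hs, ht]; ring
    exact Nat.pow_left_injective (by norm_num) this
  have hKu : K = d₁ * s ^ 2 := by rw [hU', hs]
  have hKv : K + 1 = d₂ * t ^ 2 := by rw [hV', ht]
  have hE : d₂ * t ^ 2 = d₁ * s ^ 2 + 1 := by omega
  have hs_pos : 0 < s := by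
    rcases Nat.eq_zero_or_pos s with h | h
    · exfalso; rw [h, pow_two, mul_zero, mul_zero] at hKu; omega
    · exact h
  have ht_pos : 0 < t := by
    rcases Nat.eq_zero_or_pos t with h | h
    · exfalso; rw [h, pow_two, mul_zero, mul_zero] at hKv; omega
    · exact h
  -- prime splitting
  have cop_2_1 : Nat.Coprime 2 p₁ := (Nat.coprime_primes Nat.prime_two hp₁.out).mpr (by omega)
  have cop_2_2 : Nat.Coprime 2 p₂ := (Nat.coprime_primes Nat.prime_two hp₂.out).mpr (by omega)
  have cop_2_3 : Nat.Coprime 2 p₃ := (Nat.coprime_primes Nat.prime_two hp₃.out).mpr (by omega)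
  have cop_1_2 : Nat.Coprime p₁ p₂ := (Nat.coprime_primes hp₁.out hp₂.out).mpr hd₁₂
  have cop_1_3 : Nat.Coprime p₁ p₃ := (Nat.coprime_primes hp₁.out hp₃.out).mpr hd₁₃
  have cop_2_3' : Nat.Coprime p₂ p₃ := (Nat.coprime_primes hp₂.out hp₃.out).mpr hd₂₃
  have sp2 : 2 ∣ d₁ ∨ 2 ∣ d₂ := (Nat.Prime.dvd_mul Nat.prime_two).mp
    (by rw [hprod]; exact ⟨p₁ * p₂ * p₃, by ring⟩)
  have sp1 : p₁ ∣ d₁ ∨ p₁ ∣ d₂ := (Nat.Prime.dvd_mul hp₁.out).mp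
    (by rw [hprod]; exact ⟨2 * p₂ * p₃, by ring⟩)
  have spp2 : p₂ ∣ d₁ ∨ p₂ ∣ d₂ := (Nat.Prime.dvd_mul hp₂.out).mp
    (by rw [hprod]; exact ⟨2 * p₁ * p₃, by ring⟩)
  have spp3 : p₃ ∣ d₁ ∨ p₃ ∣ d₂ := (Nat.Prime.dvd_mul hp₃.out).mp
    (by rw [hprod]; exact ⟨2 * p₁ * p₂, by ring⟩)
  have cop21 : Nat.Coprime d₂ d₁ := hcopd.symm
  have copd2 : ∀ {q : ℕ}, q ∣ d₁ → Nat.Coprime d₂ q := fun {q} h =>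
    Nat.Coprime.coprime_dvd_right h cop21
  rcases sp2 with h2d1 | h2d2 <;> rcases sp1 with hq1d1 | hq1d2 <;>
    rcases spp2 with hq2d1 | hq2d2 <;> rcases spp3 with hq3d1 | hq3d2
  · have hd2v : d₂ = 1 := aux_eq_of_pattern
      (show d₂ ∣ (1) * (2 * p₁ * p₂ * p₃) from hd₂N.trans (dvd_of_eq (by ring)))
      (one_dvd _) ((((copd2 h2d1).mul_right (copd2 hq1d1)).mul_right (copd2 hq2d1)).mul_right (copd2 hq3d1))
    have hd1v : d₁ = 2 * p₁ * p₂ * p₃ := by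
      have h' : d₁ * d₂ = (2 * p₁ * p₂ * p₃) * d₂ := by rw [hprod, hd2v]; try ring
      exact Nat.eq_of_mul_eq_mul_right hd₂pos h'
    rw [hd2v, hd1v] at hE
    exfalso
    rw [one_mul] at hE
    rw [hd2v, one_mul] at hKv
    have hEz : (t:ℤ)^2 = 2*(p₁:ℤ)*p₂*p₃*(s:ℤ)^2 + 1 := by exact_mod_cast hE
    have hat := hmin (t:ℤ) (s:ℤ) (by exact_mod_cast ht_pos) (by exact_mod_cast hs_pos) (by linarith)
    have hKtz : (K:ℤ) + 1 = (t:ℤ)^2 := by exact_mod_cast hKv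
    have hK1z : (1:ℤ) ≤ (K:ℤ) := by exact_mod_cast hK1
    linarith [sq_nonneg ((t:ℤ) - 1), hat, haK, hKtz, hK1z]
  · have hd2v : d₂ = p₃ := aux_eq_of_pattern
      (show d₂ ∣ (p₃) * (2 * p₁ * p₂) from hd₂N.trans (dvd_of_eq (by ring)))
      hq3d2 (((copd2 h2d1).mul_right (copd2 hq1d1)).mul_right (copd2 hq2d1))
    have hd1v : d₁ = 2 * p₁ * p₂ := by
      have h' : d₁ * d₂ = (2 * p₁ * p₂) * d₂ := by rw [hprod, hd2v]; try ring
      exact Nat.eq_of_mul_eq_mul_right hd₂pos h'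
    rw [hd2v, hd1v] at hE
    exfalso
    have h8 := congrArg (Nat.cast : ℕ → ZMod p₂) hE
    push_cast at h8
    rw [ZMod.natCast_self p₂] at h8
    refine aux_killer p₂ (p₃) t ?_ ?_
    · push_cast
      linear_combination h8
    · push_cast
      exact s32
  · have hd2v : d₂ = p₂ := aux_eq_of_pattern
      (show d₂ ∣ (p₂) * (2 * p₁ * p₃) from hd₂N.trans (dvd_of_eq (by ring)))
      hq2d2 (((copd2 h2d1).mul_right (copd2 hq1d1)).mul_right (copd2 hq3d1))
    have hd1v : d₁ = 2 * p₁ * p₃ := by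
      have h' : d₁ * d₂ = (2 * p₁ * p₃) * d₂ := by rw [hprod, hd2v]; try ring
      exact Nat.eq_of_mul_eq_mul_right hd₂pos h'
    rw [hd2v, hd1v] at hE
    exfalso
    have h8 := congrArg (Nat.cast : ℕ → ZMod p₁) hE
    push_cast at h8
    rw [ZMod.natCast_self p₁] at h8
    refine aux_killer p₁ (p₂) t ?_ ?_
    · push_cast
      linear_combination h8
    · push_cast
      exact s21
  · have hd2v : d₂ = p₂ * p₃ := aux_eq_of_pattern
      (show d₂ ∣ (p₂ * p₃) * (2 * p₁) from hd₂N.trans (dvd_of_eq (by ring)))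
      (cop_2_3'.mul_dvd_of_dvd_of_dvd hq2d2 hq3d2) ((copd2 h2d1).mul_right (copd2 hq1d1))
    have hd1v : d₁ = 2 * p₁ := by
      have h' : d₁ * d₂ = (2 * p₁) * d₂ := by rw [hprod, hd2v]; try ring
      exact Nat.eq_of_mul_eq_mul_right hd₂pos h'
    rw [hd2v, hd1v] at hE
    exfalso
    have h8 := congrArg (Nat.cast : ℕ → ZMod p₁) hE
    push_cast at h8
    rw [ZMod.natCast_self p₁] at h8
    refine aux_killer p₁ (p₂ * p₃) t ?_ ?_
    · push_cast
      linear_combination h8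
    · push_cast
      rw [legendreSym.mul, s21, s31]
      norm_num
  · have hd2v : d₂ = p₁ := aux_eq_of_pattern
      (show d₂ ∣ (p₁) * (2 * p₂ * p₃) from hd₂N.trans (dvd_of_eq (by ring)))
      hq1d2 (((copd2 h2d1).mul_right (copd2 hq2d1)).mul_right (copd2 hq3d1))
    have hd1v : d₁ = 2 * p₂ * p₃ := by
      have h' : d₁ * d₂ = (2 * p₂ * p₃) * d₂ := by rw [hprod, hd2v]; try ring
      exact Nat.eq_of_mul_eq_mul_right hd₂pos h'
    rw [hd2v, hd1v] at hE
    exfalso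
    have h8 := congrArg (Nat.cast : ℕ → ZMod p₃) hE
    push_cast at h8
    rw [ZMod.natCast_self p₃] at h8
    refine aux_killer p₃ (p₁) t ?_ ?_
    · push_cast
      linear_combination h8
    · push_cast
      exact s13
  · have hd2v : d₂ = p₁ * p₃ := aux_eq_of_pattern
      (show d₂ ∣ (p₁ * p₃) * (2 * p₂) from hd₂N.trans (dvd_of_eq (by ring)))
      (cop_1_3.mul_dvd_of_dvd_of_dvd hq1d2 hq3d2) ((copd2 h2d1).mul_right (copd2 hq2d1))
    have hd1v : d₁ = 2 * p₂ := by
      have h' : d₁ * d₂ = (2 * p₂) * d₂ := by rw [hprod, hd2v]; try ring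
      exact Nat.eq_of_mul_eq_mul_right hd₂pos h'
    rw [hd2v, hd1v] at hE
    exfalso
    have h8 := congrArg (Nat.cast : ℕ → ZMod p₂) hE
    push_cast at h8
    rw [ZMod.natCast_self p₂] at h8
    refine aux_killer p₂ (p₁ * p₃) t ?_ ?_
    · push_cast
      linear_combination h8
    · push_cast
      rw [legendreSym.mul, s12, s32]
      norm_num
  · have hd2v : d₂ = p₁ * p₂ := aux_eq_of_pattern
      (show d₂ ∣ (p₁ * p₂) * (2 * p₃) from hd₂N.trans (dvd_of_eq (by ring)))
      (cop_1_2.mul_dvd_of_dvd_of_dvd hq1d2 hq2d2) ((copd2 h2d1).mul_right (copd2 hq3d1))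
    have hd1v : d₁ = 2 * p₃ := by
      have h' : d₁ * d₂ = (2 * p₃) * d₂ := by rw [hprod, hd2v]; try ring
      exact Nat.eq_of_mul_eq_mul_right hd₂pos h'
    rw [hd2v, hd1v] at hE
    exfalso
    have h8 := congrArg (Nat.cast : ℕ → ZMod p₃) hE
    push_cast at h8
    rw [ZMod.natCast_self p₃] at h8
    refine aux_killer p₃ (p₁ * p₂) t ?_ ?_
    · push_cast
      linear_combination h8
    · push_cast
      rw [legendreSym.mul, s13, s23]
      norm_num
  · have hd2v : d₂ = p₁ * p₂ * p₃ := aux_eq_of_pattern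
      (show d₂ ∣ (p₁ * p₂ * p₃) * (2) from hd₂N.trans (dvd_of_eq (by ring)))
      ((cop_1_3.mul cop_2_3').mul_dvd_of_dvd_of_dvd (cop_1_2.mul_dvd_of_dvd_of_dvd hq1d2 hq2d2) hq3d2) (copd2 h2d1)
    have hd1v : d₁ = 2 := by
      have h' : d₁ * d₂ = (2) * d₂ := by rw [hprod, hd2v]; try ring
      exact Nat.eq_of_mul_eq_mul_right hd₂pos h'
    rw [hd2v, hd1v] at hE
    exfalso
    rcases Nat.even_or_odd t with he | ho
    · obtain ⟨u, hu⟩ := he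
      have hX : p₁*p₂*p₃*t^2 = 4*(p₁*p₂*p₃*u^2) := by rw [hu]; ring
      obtain ⟨Y, hY⟩ : ∃ Y, p₁*p₂*p₃*u^2 = Y := ⟨_, rfl⟩
      obtain ⟨S, hS⟩ : ∃ S, s^2 = S := ⟨_, rfl⟩
      rw [hX, hY, hS] at hE
      omega
    · exact aux_no_sol_mod8 (by rw [Nat.mul_mod, Nat.mul_mod p₁ p₂, hc₁, hc₂, hc₃]) (Nat.odd_iff.mp ho) hE
  · have hd2v : d₂ = 2 := aux_eq_of_pattern
      (show d₂ ∣ (2) * (p₁ * p₂ * p₃) from hd₂N.trans (dvd_of_eq (by ring)))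
      h2d2 (((copd2 hq1d1).mul_right (copd2 hq2d1)).mul_right (copd2 hq3d1))
    have hd1v : d₁ = p₁ * p₂ * p₃ := by
      have h' : d₁ * d₂ = (p₁ * p₂ * p₃) * d₂ := by rw [hprod, hd2v]; try ring
      exact Nat.eq_of_mul_eq_mul_right hd₂pos h'
    rw [hd2v, hd1v] at hE
    rw [hd2v] at hKv
    rw [hd1v] at hKu
    have hA1 : a + 1 = (2*(t:ℤ))^2 := by
      have h' : ((K:ℤ)+1) = 2*(t:ℤ)^2 := by exact_mod_cast hKv
      rw [haK]; linear_combination 2*h'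
    have hA2 : a - 1 = 2*(p₁:ℤ)*(p₂:ℤ)*(p₃:ℤ)*(s:ℤ)^2 := by
      have h'' : (K:ℤ) = (p₁:ℤ)*p₂*p₃*(s:ℤ)^2 := by exact_mod_cast hKu
      rw [haK]; linear_combination 2*h''
    have hBB : b = (2*(t:ℤ))*(s:ℤ) := by
      rw [hbC, hCst]; push_cast; ring
    refine ⟨2*(t:ℤ), (s:ℤ), hBB, hA1, hA2, by linear_combination hA2 - hA1, ?_⟩
    have hr2 : Real.sqrt (2*(p₁:ℝ)*p₂*p₃)^2 = 2*(p₁:ℝ)*p₂*p₃ := Real.sq_sqrt (by positivity)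
    have E1 : (a:ℝ) + 1 = (2*(t:ℝ))^2 := by exact_mod_cast hA1
    have E2 : (a:ℝ) - 1 = 2*(p₁:ℝ)*p₂*p₃*(s:ℝ)^2 := by exact_mod_cast hA2
    have E3 : (b:ℝ) = 2*(t:ℝ)*(s:ℝ) := by exact_mod_cast hBB
    push_cast
    linear_combination E1 + E2 + 2*Real.sqrt (2*(p₁:ℝ)*p₂*p₃)*E3 - (s:ℝ)^2*hr2
  · have hd2v : d₂ = 2 * p₃ := aux_eq_of_pattern
      (show d₂ ∣ (2 * p₃) * (p₁ * p₂) from hd₂N.trans (dvd_of_eq (by ring)))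
      (cop_2_3.mul_dvd_of_dvd_of_dvd h2d2 hq3d2) ((copd2 hq1d1).mul_right (copd2 hq2d1))
    have hd1v : d₁ = p₁ * p₂ := by
      have h' : d₁ * d₂ = (p₁ * p₂) * d₂ := by rw [hprod, hd2v]; try ring
      exact Nat.eq_of_mul_eq_mul_right hd₂pos h'
    rw [hd2v, hd1v] at hE
    exfalso
    have h8 := congrArg (Nat.cast : ℕ → ZMod p₂) hE
    push_cast at h8
    rw [ZMod.natCast_self p₂] at h8
    refine aux_killer p₂ (2 * p₃) t ?_ ?_
    · push_cast
      linear_combination h8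
    · push_cast
      rw [legendreSym.mul, ltwo₂, s32]
      norm_num
  · have hd2v : d₂ = 2 * p₂ := aux_eq_of_pattern
      (show d₂ ∣ (2 * p₂) * (p₁ * p₃) from hd₂N.trans (dvd_of_eq (by ring)))
      (cop_2_2.mul_dvd_of_dvd_of_dvd h2d2 hq2d2) ((copd2 hq1d1).mul_right (copd2 hq3d1))
    have hd1v : d₁ = p₁ * p₃ := by
      have h' : d₁ * d₂ = (p₁ * p₃) * d₂ := by rw [hprod, hd2v]; try ring
      exact Nat.eq_of_mul_eq_mul_right hd₂pos h'
    rw [hd2v, hd1v] at hE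
    exfalso
    have h8 := congrArg (Nat.cast : ℕ → ZMod p₁) hE
    push_cast at h8
    rw [ZMod.natCast_self p₁] at h8
    refine aux_killer p₁ (2 * p₂) t ?_ ?_
    · push_cast
      linear_combination h8
    · push_cast
      rw [legendreSym.mul, ltwo₁, s21]
      norm_num
  · have hd2v : d₂ = 2 * p₂ * p₃ := aux_eq_of_pattern
      (show d₂ ∣ (2 * p₂ * p₃) * (p₁) from hd₂N.trans (dvd_of_eq (by ring)))
      ((cop_2_3.mul cop_2_3').mul_dvd_of_dvd_of_dvd (cop_2_2.mul_dvd_of_dvd_of_dvd h2d2 hq2d2) hq3d2) (copd2 hq1d1)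
    have hd1v : d₁ = p₁ := by
      have h' : d₁ * d₂ = (p₁) * d₂ := by rw [hprod, hd2v]; try ring
      exact Nat.eq_of_mul_eq_mul_right hd₂pos h'
    rw [hd2v, hd1v] at hE
    exfalso
    have h8 := congrArg (Nat.cast : ℕ → ZMod p₁) hE
    push_cast at h8
    rw [ZMod.natCast_self p₁] at h8
    refine aux_killer p₁ (2 * p₂ * p₃) t ?_ ?_
    · push_cast
      linear_combination h8
    · push_cast
      rw [legendreSym.mul, legendreSym.mul, ltwo₁, s21, s31]
      norm_num
  · have hd2v : d₂ = 2 * p₁ := aux_eq_of_pattern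
      (show d₂ ∣ (2 * p₁) * (p₂ * p₃) from hd₂N.trans (dvd_of_eq (by ring)))
      (cop_2_1.mul_dvd_of_dvd_of_dvd h2d2 hq1d2) ((copd2 hq2d1).mul_right (copd2 hq3d1))
    have hd1v : d₁ = p₂ * p₃ := by
      have h' : d₁ * d₂ = (p₂ * p₃) * d₂ := by rw [hprod, hd2v]; try ring
      exact Nat.eq_of_mul_eq_mul_right hd₂pos h'
    rw [hd2v, hd1v] at hE
    exfalso
    have h8 := congrArg (Nat.cast : ℕ → ZMod p₃) hE
    push_cast at h8
    rw [ZMod.natCast_self p₃] at h8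
    refine aux_killer p₃ (2 * p₁) t ?_ ?_
    · push_cast
      linear_combination h8
    · push_cast
      rw [legendreSym.mul, ltwo₃, s13]
      norm_num
  · have hd2v : d₂ = 2 * p₁ * p₃ := aux_eq_of_pattern
      (show d₂ ∣ (2 * p₁ * p₃) * (p₂) from hd₂N.trans (dvd_of_eq (by ring)))
      ((cop_2_3.mul cop_1_3).mul_dvd_of_dvd_of_dvd (cop_2_1.mul_dvd_of_dvd_of_dvd h2d2 hq1d2) hq3d2) (copd2 hq2d1)
    have hd1v : d₁ = p₂ := by
      have h' : d₁ * d₂ = (p₂) * d₂ := by rw [hprod, hd2v]; try ring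
      exact Nat.eq_of_mul_eq_mul_right hd₂pos h'
    rw [hd2v, hd1v] at hE
    exfalso
    have h8 := congrArg (Nat.cast : ℕ → ZMod p₂) hE
    push_cast at h8
    rw [ZMod.natCast_self p₂] at h8
    refine aux_killer p₂ (2 * p₁ * p₃) t ?_ ?_
    · push_cast
      linear_combination h8
    · push_cast
      rw [legendreSym.mul, legendreSym.mul, ltwo₂, s12, s32]
      norm_num
  · have hd2v : d₂ = 2 * p₁ * p₂ := aux_eq_of_pattern
      (show d₂ ∣ (2 * p₁ * p₂) * (p₃) from hd₂N.trans (dvd_of_eq (by ring)))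
      ((cop_2_2.mul cop_1_2).mul_dvd_of_dvd_of_dvd (cop_2_1.mul_dvd_of_dvd_of_dvd h2d2 hq1d2) hq2d2) (copd2 hq3d1)
    have hd1v : d₁ = p₃ := by
      have h' : d₁ * d₂ = (p₃) * d₂ := by rw [hprod, hd2v]; try ring
      exact Nat.eq_of_mul_eq_mul_right hd₂pos h'
    rw [hd2v, hd1v] at hE
    exfalso
    have h8 := congrArg (Nat.cast : ℕ → ZMod p₃) hE
    push_cast at h8
    rw [ZMod.natCast_self p₃] at h8
    refine aux_killer p₃ (2 * p₁ * p₂) t ?_ ?_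
    · push_cast
      linear_combination h8
    · push_cast
      rw [legendreSym.mul, legendreSym.mul, ltwo₃, s13, s23]
      norm_num
  · have hd2v : d₂ = 2 * p₁ * p₂ * p₃ := aux_eq_of_pattern
      (show d₂ ∣ (2 * p₁ * p₂ * p₃) * (1) from hd₂N.trans (dvd_of_eq (by ring)))
      (((cop_2_3.mul cop_1_3).mul cop_2_3').mul_dvd_of_dvd_of_dvd ((cop_2_2.mul cop_1_2).mul_dvd_of_dvd_of_dvd (cop_2_1.mul_dvd_of_dvd_of_dvd h2d2 hq1d2) hq2d2) hq3d2) (Nat.coprime_one_right d₂)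
    have hd1v : d₁ = 1 := by
      have h' : d₁ * d₂ = (1) * d₂ := by rw [hprod, hd2v]; try ring
      exact Nat.eq_of_mul_eq_mul_right hd₂pos h'
    rw [hd2v, hd1v] at hE
    exfalso
    rw [one_mul] at hE
    have h8 := congrArg (Nat.cast : ℕ → ZMod p₁) hE
    push_cast at h8
    rw [ZMod.natCast_self p₁] at h8
    have hsq : IsSquare (-1 : ZMod p₁) := ⟨(s : ZMod p₁), by linear_combination h8⟩
    exact absurd (ZMod.exists_sq_eq_neg_one_iff.mp hsq) (by omega)
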